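/- Let D be a diagonal unitary matrix with at least three distinct eigenvalues. Then any unitary matrix in the complex linear span of the identity matrix and D is a scalar multiple of the identity or a scalar multiple of D. -/
import Mathlib

open Complex Matrix

private lemma diag_unitary_entry {n : ℕ} (M : Matrix (Fin n) (Fin n) ℂ)
    (hM : M.IsDiag) (h : M * Mᴴ = 1) (i : Fin n) :
    M i i * (starRingEnd ℂ) (M i i) = 1 := by
  have h' := (Matrix.ext_iff.mpr h) i i
  rw [Matrix.mul_apply] at h'
  rw [Finset.sum_eq_single i (fun x _ hx => by
      simp [Matrix.conjTranspose_apply, hM (Ne.symm hx)]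
      ) (fun hx => absurd (Finset.mem_univ i) hx)] at h'
  rw [Matrix.conjTranspose_apply] at h'
  simpa using h'

private lemma key_alg (a b d1 d2 d3 : ℂ)
    (hd1 : d1 * (starRingEnd ℂ) d1 = 1)
    (hd2 : d2 * (starRingEnd ℂ) d2 = 1)
    (hd3 : d3 * (starRingEnd ℂ) d3 = 1)
    (hu1 : (a + b * d1) * (starRingEnd ℂ) (a + b * d1) = 1)
    (hu2 : (a + b * d2) * (starRingEnd ℂ) (a + b * d2) = 1)
    (hu3 : (a + b * d3) * (starRingEnd ℂ) (a + b * d3) = 1)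
    (h12 : d1 ≠ d2) (h13 : d1 ≠ d3) (h23 : d2 ≠ d3) :
    a = 0 ∨ b = 0 := by
  set A := (starRingEnd ℂ) a with hA
  set B := (starRingEnd ℂ) b with hB
  set E1 := (starRingEnd ℂ) d1 with hE1
  set E2 := (starRingEnd ℂ) d2 with hE2
  set E3 := (starRingEnd ℂ) d3 with hE3
  simp only [map_add, _root_.map_mul, ← hA, ← hB, ← hE1, ← hE2, ← hE3] at hu1 hu2 hu3
  set K : ℂ := 1 - a * A - b * B with hK
  -- multiplied equations: a*B + A*b*d^2 = K*d
  have m1 : a * B + A * b * d1 ^ 2 = K * d1 := by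
    rw [hK]; linear_combination d1 * hu1 - (a * B + b * B * d1) * hd1
  have m2 : a * B + A * b * d2 ^ 2 = K * d2 := by
    rw [hK]; linear_combination d2 * hu2 - (a * B + b * B * d2) * hd2
  have m3 : a * B + A * b * d3 ^ 2 = K * d3 := by
    rw [hK]; linear_combination d3 * hu3 - (a * B + b * B * d3) * hd3
  have p12 : A * b * (d1 + d2) = K := by
    have h : (d1 - d2) * (A * b * (d1 + d2)) = (d1 - d2) * K := by
      linear_combination m1 - m2
    exact mul_left_cancel₀ (sub_ne_zero.mpr h12) h
  have p13 : A * b * (d1 + d3) = K := by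
    have h : (d1 - d3) * (A * b * (d1 + d3)) = (d1 - d3) * K := by
      linear_combination m1 - m3
    exact mul_left_cancel₀ (sub_ne_zero.mpr h13) h
  have hAb : A * b = 0 := by
    have h : A * b * (d2 - d3) = 0 := by linear_combination p12 - p13
    rcases mul_eq_zero.mp h with h | h
    · exact h
    · exact absurd (sub_eq_zero.mp h) h23
  rcases mul_eq_zero.mp hAb with h | h
  · left
    have := congrArg (starRingEnd ℂ) h
    simpa [hA] using this
  · right; exact h

theorem stmt1 {n : ℕ} (D : Matrix (Fin n) (Fin n) ℂ)
    (hdiag : D.IsDiag) (hD : D ∈ Matrix.unitaryGroup (Fin n) ℂ)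
    (h3 : ∃ i j k : Fin n, D i i ≠ D j j ∧ D i i ≠ D k k ∧ D j j ≠ D k k) :
    ∀ U ∈ Submodule.span ℂ ({1, D} : Set (Matrix (Fin n) (Fin n) ℂ)),
      U ∈ Matrix.unitaryGroup (Fin n) ℂ →
        (∃ c : ℂ, U = c • (1 : Matrix (Fin n) (Fin n) ℂ)) ∨ (∃ c : ℂ, U = c • D) := by
  intro U hspan hU
  obtain ⟨i, j, k, hij, hik, hjk⟩ := h3
  obtain ⟨a, b, hab⟩ := Submodule.mem_span_pair.mp hspan
  have hDmul : D * Dᴴ = 1 := by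
    have := Matrix.mem_unitaryGroup_iff.mp hD
    simpa [Matrix.star_eq_conjTranspose] using this
  have hUmul : U * Uᴴ = 1 := by
    have := Matrix.mem_unitaryGroup_iff.mp hU
    simpa [Matrix.star_eq_conjTranspose] using this
  have hUdiag : U.IsDiag := by
    intro p q hpq
    rw [← hab]
    simp [Matrix.add_apply, Matrix.smul_apply, Matrix.one_apply_ne hpq, hdiag hpq]
  have hUentry : ∀ p : Fin n, U p p = a + b * D p p := by
    intro p
    rw [← hab]
    simp [Matrix.add_apply, Matrix.smul_apply, Matrix.one_apply_eq]
  have hd : ∀ p : Fin n, D p p * (starRingEnd ℂ) (D p p) = 1 :=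
    fun p => diag_unitary_entry D hdiag hDmul p
  have hu : ∀ p : Fin n, (a + b * D p p) * (starRingEnd ℂ) (a + b * D p p) = 1 := by
    intro p
    have := diag_unitary_entry U hUdiag hUmul p
    rwa [hUentry p] at this
  rcases key_alg a b (D i i) (D j j) (D k k) (hd i) (hd j) (hd k)
      (hu i) (hu j) (hu k) hij hik hjk with ha | hb
  · right
    refine ⟨b, ?_⟩
    rw [← hab, ha]
    simp
  · left
    refine ⟨a, ?_⟩
    rw [← hab, hb]
    simp
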